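/- Let R = (v_1, v_2, ...) be a ray and let l : V(R) → [0,∞) be a non-degenerate labeling. Let (u_n)_{n ∈ ℕ} be a sequence of points of V(R) with u_{n_1} ≠ u_{n_2} whenever n_1 ≠ n_2. Then (u_n)_{n ∈ ℕ} is a Cauchy sequence in the ultrametric space (V(R), d_l) if and only if (v_m)_{m ∈ ℕ} is a Cauchy sequence in this space. -/

import Mathlib

open SimpleGraph

/-- `d` is an ultrametric on `V`: a metric satisfying the strong triangle inequality. -/
def IsUltrametricOn {V : Type*} (d : V → V → ℝ) : Prop :=
  (∀ x y, 0 ≤ d x y) ∧ (∀ x y, d x y = d y x) ∧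
    (∀ x y, d x y = 0 ↔ x = y) ∧
    ∀ x y z, d x y ≤ max (d x z) (d z y)

/-- The vertex labeling `l` of the graph `G` is non-degenerate:
`max {l u, l v} > 0` for every edge `{u, v}`. -/
def NondegenerateLabeling {V : Type*} (G : SimpleGraph V) (l : V → ℝ) : Prop :=
  ∀ u v, G.Adj u v → 0 < max (l u) (l v)

/-- `d` is the function `d_l` generated by the vertex labeling `l` on the tree `G`:
`d u u = 0`, and for `u ≠ v`, `d u v` is the maximum of the labels of the vertices of
the (unique) path joining `u` and `v`. -/
def IsLabelDist {V : Type*} (G : SimpleGraph V) (l : V → ℝ) (d : V → V → ℝ) : Prop :=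
  (∀ u, d u u = 0) ∧
    ∀ u v : V, u ≠ v → ∀ p : G.Walk u v, p.IsPath →
      IsGreatest (l '' {w | w ∈ p.support}) (d u v)

/-- `x` is a Cauchy sequence with respect to the distance function `d`. -/
def CauchyWith {V : Type*} (d : V → V → ℝ) (x : ℕ → V) : Prop :=
  ∀ ε : ℝ, 0 < ε → ∃ N : ℕ, ∀ m ≥ N, ∀ n ≥ N, d (x m) (x n) < ε

/-- The set `A` is totally bounded with respect to the distance function `d`:
for every `r > 0` it is covered by finitely many open balls of radius `r` centered in `A`. -/
def TotallyBoundedWith {V : Type*} (d : V → V → ℝ) (A : Set V) : Prop :=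
  ∀ r : ℝ, 0 < r → ∃ s : Finset V, ↑s ⊆ A ∧ ∀ x ∈ A, ∃ c ∈ s, d c x < r

/-- The space `V` with distance `d` is compact: every cover of `V` by open balls
(given by center–radius pairs) contains a finite subcover. -/
def CompactWith {V : Type*} (d : V → V → ℝ) : Prop :=
  ∀ F : Set (V × ℝ), (∀ x : V, ∃ p ∈ F, d p.1 x < p.2) →
    ∃ s : Finset (V × ℝ), ↑s ⊆ F ∧ ∀ x : V, ∃ p ∈ s, d p.1 x < p.2

/-- The subgraph `R` of `G` is a ray: its vertices can be enumerated as a sequence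
`f 0, f 1, …` of pairwise distinct vertices, with edges exactly `{f n, f (n+1)}`. -/
def IsRaySubgraph {V : Type*} {G : SimpleGraph V} (R : G.Subgraph) : Prop :=
  ∃ f : ℕ → V, Function.Injective f ∧ R.verts = Set.range f ∧
    ∀ x y, R.Adj x y ↔ ∃ n, (x = f n ∧ y = f (n + 1)) ∨ (x = f (n + 1) ∧ y = f n)

/-- The subgraph `T₀` of `G` is a finite subtree. -/
def IsFiniteSubtree {V : Type*} {G : SimpleGraph V} (T₀ : G.Subgraph) : Prop :=
  T₀.verts.Finite ∧ T₀.coe.IsTree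

/-- The subgraph `H` of `G` is almost a ray: `H` is the union of a ray and a finite subtree. -/
def IsAlmostRaySubgraph {V : Type*} {G : SimpleGraph V} (H : G.Subgraph) : Prop :=
  ∃ R T₀ : G.Subgraph, IsRaySubgraph R ∧ IsFiniteSubtree T₀ ∧ T₀ ⊔ R = H

/-- The graph `G` is almost a ray: `G` is the union of a ray and a finite subtree. -/
def IsAlmostRayGraph {V : Type*} (G : SimpleGraph V) : Prop :=
  ∃ R T₀ : G.Subgraph, IsRaySubgraph R ∧ IsFiniteSubtree T₀ ∧ T₀ ⊔ R = ⊤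

/-- `H` is the convex hull of the vertex set `A` in `G`: a subtree containing `A`
which is a subgraph of every subtree of `G` containing `A`. -/
def IsConvexHullSubtree {V : Type*} (G : SimpleGraph V) (A : Set V) (H : G.Subgraph) : Prop :=
  H.coe.IsTree ∧ A ⊆ H.verts ∧
    ∀ H' : G.Subgraph, H'.coe.IsTree → A ⊆ H'.verts → H ≤ H'


section Stmt6Aux

variable {V : Type*} {G : SimpleGraph V} {v : ℕ → V} {l : V → ℝ} {d : V → V → ℝ}

/-- The walk along the ray from `v i` to `v (i + n)`. -/
def walkUp (h : ∀ n, G.Adj (v n) (v (n + 1))) (i : ℕ) : (n : ℕ) → G.Walk (v i) (v (i + n))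
  | 0 => SimpleGraph.Walk.nil
  | n + 1 => (walkUp h i n).concat (h (i + n))

lemma support_walkUp (h : ∀ n, G.Adj (v n) (v (n + 1))) (i : ℕ) :
    ∀ n, (walkUp h i n).support = (List.range (n + 1)).map (fun t => v (i + t)) := by
  intro n
  induction n with
  | zero => simp [walkUp, List.range_succ]
  | succ n ih =>
      simp [walkUp, Walk.support_concat, ih, List.range_succ]

lemma isPath_walkUp (hv : Function.Injective v) (h : ∀ n, G.Adj (v n) (v (n + 1)))
    (i n : ℕ) : (walkUp h i n).IsPath := by
  rw [Walk.isPath_def, support_walkUp]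
  exact List.Nodup.map (fun a b hab => by have := hv hab; omega) List.nodup_range

lemma dGreatest (hv : Function.Injective v) (h : ∀ n, G.Adj (v n) (v (n + 1)))
    (hd : IsLabelDist G l d) {i j : ℕ} (hij : i < j) :
    IsGreatest (l '' {w | ∃ t, i ≤ t ∧ t ≤ j ∧ w = v t}) (d (v i) (v j)) := by
  obtain ⟨n, rfl⟩ : ∃ n, j = i + n := ⟨j - i, by omega⟩
  have hne : v i ≠ v (i + n) := fun hcon => by have := hv hcon; omega
  have hg := hd.2 _ _ hne (walkUp h i n) (isPath_walkUp hv h i n)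
  have hset : {w | w ∈ (walkUp h i n).support} = {w | ∃ t, i ≤ t ∧ t ≤ i + n ∧ w = v t} := by
    ext w
    simp only [Set.mem_setOf_eq, support_walkUp, List.mem_map, List.mem_range]
    constructor
    · rintro ⟨t, ht, rfl⟩; exact ⟨i + t, by omega, by omega, rfl⟩
    · rintro ⟨t, h1, h2, rfl⟩; exact ⟨t - i, by omega, by congr 1; omega⟩
  rwa [hset] at hg

lemma dswap (hv : Function.Injective v) (h : ∀ n, G.Adj (v n) (v (n + 1)))
    (hd : IsLabelDist G l d) {i j : ℕ} (hij : i < j) : d (v j) (v i) = d (v i) (v j) := by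
  obtain ⟨n, rfl⟩ : ∃ n, j = i + n := ⟨j - i, by omega⟩
  have hne : v i ≠ v (i + n) := fun hcon => by have := hv hcon; omega
  have h1 := hd.2 _ _ hne (walkUp h i n) (isPath_walkUp hv h i n)
  have h2 := hd.2 _ _ hne.symm (walkUp h i n).reverse (isPath_walkUp hv h i n).reverse
  have hset : {w | w ∈ (walkUp h i n).reverse.support} = {w | w ∈ (walkUp h i n).support} := by
    ext w; simp [Walk.support_reverse]
  rw [hset] at h2
  exact h2.unique h1

lemma d_bounds (hv : Function.Injective v) (h : ∀ n, G.Adj (v n) (v (n + 1)))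
    (hd : IsLabelDist G l d) {i j : ℕ} (hij : i ≠ j) :
    (∀ t, min i j ≤ t → t ≤ max i j → l (v t) ≤ d (v i) (v j)) ∧
      ∃ t, min i j ≤ t ∧ t ≤ max i j ∧ d (v i) (v j) = l (v t) := by
  rcases lt_or_gt_of_ne hij with hlt | hlt
  · have hg := dGreatest hv h hd hlt
    rw [min_eq_left hlt.le, max_eq_right hlt.le]
    constructor
    · intro t h1 h2
      exact hg.2 ⟨v t, ⟨t, h1, h2, rfl⟩, rfl⟩
    · obtain ⟨w, ⟨t, h1, h2, rfl⟩, hw⟩ := hg.1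
      exact ⟨t, h1, h2, hw.symm⟩
  · have hg := dGreatest hv h hd hlt
    rw [min_eq_right hlt.le, max_eq_left hlt.le, dswap hv h hd hlt]
    constructor
    · intro t h1 h2
      exact hg.2 ⟨v t, ⟨t, h1, h2, rfl⟩, rfl⟩
    · obtain ⟨w, ⟨t, h1, h2, rfl⟩, hw⟩ := hg.1
      exact ⟨t, h1, h2, hw.symm⟩

lemma cauchy_iff_tail (hv : Function.Injective v) (h : ∀ n, G.Adj (v n) (v (n + 1)))
    (hd : IsLabelDist G l d) {k : ℕ → ℕ} (hk : Function.Injective k) :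
    CauchyWith d (fun n => v (k n)) ↔ ∀ ε : ℝ, 0 < ε → ∃ M, ∀ t ≥ M, l (v t) < ε := by
  have htend : Filter.Tendsto k Filter.atTop Filter.atTop := by
    have := hk.tendsto_cofinite
    rwa [Nat.cofinite_eq_atTop] at this
  constructor
  · intro hc ε hε
    obtain ⟨N, hN⟩ := hc ε hε
    refine ⟨k N, fun t ht => ?_⟩
    obtain ⟨n, hn1, hn2⟩ := ((htend.eventually_ge_atTop (t + 1)).and
      (Filter.eventually_ge_atTop N)).exists
    have hne : k N ≠ k n := by omega
    have hb := (d_bounds hv h hd hne).1 t (by omega) (by omega)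
    exact lt_of_le_of_lt hb (hN N le_rfl n hn2)
  · intro htail ε hε
    obtain ⟨M, hM⟩ := htail ε hε
    obtain ⟨N, hN⟩ := Filter.eventually_atTop.mp (htend.eventually_ge_atTop M)
    refine ⟨N, fun m hm n hn => ?_⟩
    show d (v (k m)) (v (k n)) < ε
    by_cases hmn : k m = k n
    · rw [hmn, hd.1]; exact hε
    · obtain ⟨t, h1, h2, ht⟩ := (d_bounds hv h hd hmn).2
      rw [ht]
      exact hM t (le_trans (le_min (hN m hm) (hN n hn)) h1)

end Stmt6Aux

/-- For a ray `R = (v 0, v 1, …)` with non-degenerate labeling `l` and a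
sequence `u` of pairwise distinct vertices of `R`, the sequence `u` is Cauchy in
`(V(R), d_l)` iff the sequence `v` is Cauchy in this space. -/
theorem stmt6 {V : Type*} (G : SimpleGraph V) (v : ℕ → V) (hv : Function.Bijective v)
    (hadj : ∀ x y, G.Adj x y ↔ ∃ n, (x = v n ∧ y = v (n + 1)) ∨ (x = v (n + 1) ∧ y = v n))
    (l : V → ℝ) (hl : ∀ w, 0 ≤ l w) (hnd : NondegenerateLabeling G l)
    (d : V → V → ℝ) (hd : IsLabelDist G l d)
    (u : ℕ → V) (hu : Function.Injective u) :
    CauchyWith d u ↔ CauchyWith d v := by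
  have h : ∀ n, G.Adj (v n) (v (n + 1)) := fun n => (hadj _ _).mpr ⟨n, Or.inl ⟨rfl, rfl⟩⟩
  let e := Equiv.ofBijective v hv
  let k : ℕ → ℕ := fun n => e.symm (u n)
  have hue : u = fun n => v (k n) := by
    funext n
    have := e.apply_symm_apply (u n)
    exact this.symm
  have hk : Function.Injective k := fun a b hab => hu (e.symm.injective hab)
  have hvid : v = fun n => v (id n) := rfl
  rw [hue, hvid]
  exact (cauchy_iff_tail hv.1 h hd hk).trans
    (cauchy_iff_tail hv.1 h hd Function.injective_id).symm
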